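/- Let R be a finite irreducible root system with highest root θ, α a long simple root, and y_α the minimal-length element with y_α(α) = θ. If β₁ + β₂ = θ with β₁, β₂ ∈ R⁺, then exactly one of β₁, β₂ belongs to N(y_α). -/

import Mathlib

open scoped RealInnerProductSpace

/-- Geometric data of a (finite or affine) root system with a choice of
positive and simple roots, inside a real inner product space. -/
structure RootSystemData (V : Type*) [NormedAddCommGroup V] [InnerProductSpace ℝ V] where
  roots : Set V
  pos : Set V
  simples : Set V
  simples_sub : simples ⊆ pos
  pos_sub : pos ⊆ roots
  ne_zero : ∀ α ∈ roots, α ≠ (0 : V)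
  eq_union : roots = pos ∪ (Neg.neg '' pos)
  not_both : ∀ α ∈ pos, -α ∉ pos

namespace RootSystemData

variable {V : Type*} [NormedAddCommGroup V] [InnerProductSpace ℝ V]
  [FiniteDimensional ℝ V]

/-- The orthogonal reflection in the hyperplane orthogonal to `α`. -/
noncomputable def srefl (α : V) : V ≃ₗᵢ[ℝ] V := Submodule.reflection (ℝ ∙ α)ᗮ

variable (R : RootSystemData V)

/-- The root system data is geometric: simple reflections permute the
positive roots other than the corresponding simple root, and the set of
roots is stable under all reflections in roots. -/
structure IsGeometric : Prop where
  simple_perm : ∀ α ∈ R.simples, ∀ β ∈ R.pos, β ≠ α → srefl α β ∈ R.pos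
  refl_stable : ∀ α ∈ R.roots, ∀ β ∈ R.roots, srefl α β ∈ R.roots
  pos_comb : ∀ α ∈ R.pos, α ∈ AddSubmonoid.closure R.simples

/-- The Weyl group: the group generated by the simple reflections. -/
noncomputable def W : Subgroup (V ≃ₗᵢ[ℝ] V) :=
  Subgroup.closure {g | ∃ α ∈ R.simples, g = srefl α}

/-- The inversion set `N(w) = {α ∈ Δ⁺ ∣ w⁻¹ α ∈ -Δ⁺}`. -/
def N (w : V ≃ₗᵢ[ℝ] V) : Set V := {α | α ∈ R.pos ∧ w⁻¹ α ∈ Neg.neg '' R.pos}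

/-- `l` is a word in the simple reflections representing `w`. -/
noncomputable def IsWord (l : List V) (w : V ≃ₗᵢ[ℝ] V) : Prop :=
  (∀ α ∈ l, α ∈ R.simples) ∧ w = (l.map srefl).prod

/-- The length of `w` : the least length of a word in the simple reflections
representing `w`. -/
noncomputable def length (w : V ≃ₗᵢ[ℝ] V) : ℕ :=
  sInf {n | ∃ l : List V, R.IsWord l w ∧ l.length = n}

/-- A reduced expression. -/
noncomputable def IsReduced (l : List V) (w : V ≃ₗᵢ[ℝ] V) : Prop :=
  R.IsWord l w ∧ l.length = R.length w

/-- The (left) weak Bruhat order: some reduced expression of `w₁` is an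
initial segment of a reduced expression of `w₂`. -/
noncomputable def weakLE (w₁ w₂ : V ≃ₗᵢ[ℝ] V) : Prop :=
  ∃ l₁ l₂ : List V, R.IsReduced l₁ w₁ ∧ R.IsReduced (l₁ ++ l₂) w₂

end RootSystemData

open RootSystemData
open scoped RealInnerProductSpace

variable {V : Type*} [NormedAddCommGroup V] [InnerProductSpace ℝ V] [FiniteDimensional ℝ V]


section Aux

lemma srefl_apply (a x : V) : srefl a x = x - (2 * ⟪a, x⟫ / ⟪a, a⟫) • a := by
  rw [srefl, Submodule.reflection_apply, Submodule.starProjection_orthogonal_val,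
    Submodule.starProjection_singleton, real_inner_self_eq_norm_sq]
  simp only [RCLike.ofReal_real_eq_id, id]
  match_scalars <;> ring

lemma real_inner_self_pos' {v : V} (h : v ≠ 0) : 0 < ⟪v, v⟫ := by
  rw [real_inner_self_eq_norm_sq]
  exact pow_pos (norm_pos_iff.mpr h) 2

lemma srefl_self (a : V) (h : a ≠ 0) : srefl a a = -a := by
  have h0 : ⟪a, a⟫ ≠ 0 := ne_of_gt (real_inner_self_pos' h)
  rw [srefl_apply, mul_div_assoc, div_self h0, mul_one, two_smul]
  abel

lemma srefl_srefl (a x : V) : srefl a (srefl a x) = x := Submodule.reflection_reflection _ x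

lemma srefl_inv (a : V) : (srefl a)⁻¹ = srefl (V := V) a := by
  show (srefl a).symm = srefl a
  exact Submodule.reflection_symm

end Aux

/-- if `β₁ + β₂ = θ` with `β₁, β₂ ∈ R⁺`, exactly one of them is in `N(y_α)`. -/
theorem exactly_one_summand_in_inversions (R : RootSystemData V) (hR : R.IsGeometric)
    (hfin : R.roots.Finite)
    (hcrys : ∀ α ∈ R.roots, ∀ β ∈ R.roots, ∃ n : ℤ, 2 * ⟪α, β⟫ / ⟪α, α⟫ = (n : ℝ))
    (hirr : ∀ S₁ S₂ : Set V, R.simples = S₁ ∪ S₂ →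
      (∀ a ∈ S₁, ∀ b ∈ S₂, ⟪a, b⟫ = 0) → S₁ = ∅ ∨ S₂ = ∅)
    (θ : V) (hθpos : θ ∈ R.pos)
    (hθhigh : ∀ α ∈ R.roots, θ - α ∈ AddSubmonoid.closure R.simples)
    (α : V) (hα : α ∈ R.simples) (hlong : ∀ β ∈ R.roots, ‖β‖ ≤ ‖α‖)
    (y : V ≃ₗᵢ[ℝ] V) (hy : y ∈ R.W ∧ y α = θ ∧
      ∀ z : V ≃ₗᵢ[ℝ] V, z ∈ R.W → z α = θ → R.length y ≤ R.length z)
    (β₁ β₂ : V) (hβ₁ : β₁ ∈ R.pos) (hβ₂ : β₂ ∈ R.pos) (hsum : β₁ + β₂ = θ) :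
    Xor' (β₁ ∈ R.N y) (β₂ ∈ R.N y) := by
  classical
  obtain ⟨hyW, hyα, -⟩ := hy
  have hselfpos : ∀ v : V, v ≠ 0 → 0 < ⟪v, v⟫ := fun v hv => real_inner_self_pos' hv
  have hαpos : α ∈ R.pos := R.simples_sub hα
  have hαroot : α ∈ R.roots := R.pos_sub hαpos
  have hαne : α ≠ 0 := R.ne_zero α hαroot
  -- the sum of all positive roots
  have hposfin : R.pos.Finite := hfin.subset R.pos_sub
  set P : Finset V := hposfin.toFinset with hP
  set ρ : V := ∑ β ∈ P, β with hρdef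
  -- simple reflections permute `P.erase γ`
  have hsrefl_pos : ∀ γ ∈ R.simples, ∀ β ∈ P.erase γ, srefl γ β ∈ P.erase γ := by
    intro γ hγ β hβ
    have hγpos := R.simples_sub hγ
    have hγne : γ ≠ 0 := R.ne_zero γ (R.pos_sub hγpos)
    obtain ⟨hne, hβP⟩ := Finset.mem_erase.mp hβ
    have hβpos : β ∈ R.pos := hposfin.mem_toFinset.mp hβP
    have h1 : srefl γ β ∈ R.pos := hR.simple_perm γ hγ β hβpos hne
    refine Finset.mem_erase.mpr ⟨?_, hposfin.mem_toFinset.mpr h1⟩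
    intro h
    have hβeq : β = -γ := by
      have h2 := congrArg (srefl γ) h
      rwa [srefl_srefl, srefl_self γ hγne] at h2
    exact R.not_both γ hγpos (hβeq ▸ hβpos)
  -- key inner product computation : ⟪γ, ρ⟫ = ⟪γ, γ⟫ for γ simple
  have hiρ : ∀ γ ∈ R.simples, ⟪γ, ρ⟫ = ⟪γ, γ⟫ := by
    intro γ hγ
    have hγpos := R.simples_sub hγ
    have hγne : γ ≠ 0 := R.ne_zero γ (R.pos_sub hγpos)
    have hγP : γ ∈ P := hposfin.mem_toFinset.mpr hγpos
    have hsum1 : ∑ β ∈ P.erase γ, srefl γ β = ∑ β ∈ P.erase γ, (β : V) :=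
      Finset.sum_nbij' (srefl γ) (srefl γ) (hsrefl_pos γ hγ) (hsrefl_pos γ hγ)
        (fun a _ => srefl_srefl γ a) (fun a _ => srefl_srefl γ a) (fun a _ => rfl)
    have hrefl : srefl γ ρ = ρ - 2 • γ := by
      rw [hρdef, map_sum, ← Finset.add_sum_erase _ _ hγP,
        ← Finset.add_sum_erase _ (fun β : V => β) hγP, hsum1, srefl_self γ hγne, two_smul]
      abel
    have hfla : srefl γ ρ = ρ - (2 * ⟪γ, ρ⟫ / ⟪γ, γ⟫) • γ := srefl_apply γ ρ
    have h2 : (2 * ⟪γ, ρ⟫ / ⟪γ, γ⟫) • γ = (2 : ℝ) • γ := by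
      have h3 := sub_right_injective (hfla.symm.trans hrefl)
      rw [h3, two_smul, two_smul]
    have hc : 2 * ⟪γ, ρ⟫ / ⟪γ, γ⟫ = 2 := by
      have h4 : (2 * ⟪γ, ρ⟫ / ⟪γ, γ⟫ - 2) • γ = 0 := by
        rw [sub_smul, h2, sub_self]
      rcases smul_eq_zero.mp h4 with h | h
      · linarith [h]
      · exact absurd h hγne
    have h0 : ⟪γ, γ⟫ ≠ 0 := ne_of_gt (hselfpos γ hγne)
    field_simp at hc
    linarith
  -- inner products with multiset sums
  have hsum_inner : ∀ (z : V) (m : Multiset V),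
      ⟪m.sum, z⟫ = (m.map (fun x => ⟪x, z⟫)).sum := by
    intro z m
    induction m using Multiset.induction_on with
    | empty => simp
    | cons a s ih => simp [inner_add_left, ih]
  have hnn : ∀ m : Multiset V, (∀ x ∈ m, x ∈ R.simples) → 0 ≤ ⟪m.sum, ρ⟫ := by
    intro m hm
    rw [hsum_inner]
    apply Multiset.sum_nonneg
    intro x hx
    obtain ⟨a, ha, rfl⟩ := Multiset.mem_map.mp hx
    rw [hiρ a (hm a ha)]
    exact real_inner_self_nonneg
  -- positivity of ⟪β, ρ⟫ for positive roots β
  have hposroot : ∀ β ∈ R.pos, 0 < ⟪β, ρ⟫ := by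
    intro β hβ
    obtain ⟨m, hm, hmsum⟩ := AddSubmonoid.exists_multiset_of_mem_closure (hR.pos_comb β hβ)
    have hβne : β ≠ 0 := R.ne_zero β (R.pos_sub hβ)
    have hmne : m ≠ 0 := by
      rintro rfl
      rw [Multiset.sum_zero] at hmsum
      exact hβne hmsum.symm
    obtain ⟨x, hx⟩ := Multiset.exists_mem_of_ne_zero hmne
    obtain ⟨m', rfl⟩ := Multiset.exists_cons_of_mem hx
    rw [← hmsum, Multiset.sum_cons, inner_add_left]
    have hxs := hm x (Multiset.mem_cons_self x m')
    have h1 : 0 < ⟪x, ρ⟫ := by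
      rw [hiρ x hxs]
      exact hselfpos x (R.ne_zero x (R.pos_sub (R.simples_sub hxs)))
    have h2 : 0 ≤ ⟪m'.sum, ρ⟫ := hnn m' (fun z hz => hm z (Multiset.mem_cons_of_mem hz))
    linarith
  -- distinct simple roots form obtuse angles
  have hobtuse : ∀ γ ∈ R.simples, ∀ δ ∈ R.simples, γ ≠ δ → ⟪γ, δ⟫ ≤ 0 := by
    have main : ∀ a b : V, a ∈ R.simples → b ∈ R.simples → a ≠ b → 0 < ⟪a, b⟫ →
        ⟪a, ρ⟫ < ⟪b, ρ⟫ := by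
      intro a b ha hb hab hip
      have hapos := R.simples_sub ha
      have haroot := R.pos_sub hapos
      have hbpos := R.simples_sub hb
      have hbroot := R.pos_sub hbpos
      have hane := R.ne_zero a haroot
      have haa := hselfpos a hane
      obtain ⟨n, hn⟩ := hcrys a haroot b hbroot
      have hcpos : 0 < 2 * ⟪a, b⟫ / ⟪a, a⟫ := div_pos (by linarith) haa
      have hc1 : (1 : ℝ) ≤ 2 * ⟪a, b⟫ / ⟪a, a⟫ := by
        rw [hn] at hcpos ⊢
        have hn0 : (0 : ℤ) < n := by exact_mod_cast hcpos
        exact_mod_cast hn0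
      have hsab : srefl a b ∈ R.pos :=
        hR.simple_perm a ha b hbpos (fun h => hab (h ▸ rfl))
      have h1 : 0 < ⟪srefl a b, ρ⟫ := hposroot _ hsab
      rw [srefl_apply, inner_sub_left, real_inner_smul_left] at h1
      have haρ : 0 < ⟪a, ρ⟫ := hposroot a hapos
      nlinarith
    intro γ hγ δ hδ hne
    by_contra hgt
    push_neg at hgt
    have h1 := main γ δ hγ hδ hne hgt
    have h2 := main δ γ hδ hγ hne.symm (by rwa [real_inner_comm])
    linarith
  -- a multiset of simple roots summing to the simple root α must be {α}
  have key : ∀ m : Multiset V, (∀ x ∈ m, x ∈ R.simples) → m.sum = α → m = {α} := by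
    intro m hm hmsum
    have hsplit : m.filter (· = α) + m.filter (fun x => ¬ x = α) = m :=
      Multiset.filter_add_not _ m
    obtain ⟨r, hrdef⟩ : ∃ r, r = m.filter (fun x => ¬ x = α) := ⟨_, rfl⟩
    obtain ⟨k, hkdef⟩ : ∃ k, k = m.count α := ⟨_, rfl⟩
    have hrep : m.filter (· = α) = Multiset.replicate k α := by
      rw [hkdef]; exact Multiset.filter_eq' m α
    have hsum2 : k • α + r.sum = α := by
      conv_rhs => rw [← hmsum, ← hsplit]
      rw [Multiset.sum_add, hrep, Multiset.sum_replicate, hrdef]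
    have hrsimple : ∀ x ∈ r, x ∈ R.simples := by
      intro x hx
      rw [hrdef] at hx
      exact hm x (Multiset.mem_of_mem_filter hx)
    have hrne : ∀ x ∈ r, x ≠ α := by
      intro x hx
      rw [hrdef] at hx
      exact (Multiset.mem_filter.mp hx).2
    rcases Nat.eq_zero_or_pos k with hk0 | hkpos
    · exfalso
      have hrs : r.sum = α := by
        rw [hk0, zero_smul, zero_add] at hsum2
        exact hsum2
      have hnp : ∀ s : Multiset V, (∀ x ∈ s, ⟪x, α⟫ ≤ 0) → ⟪s.sum, α⟫ ≤ 0 := by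
        intro s
        induction s using Multiset.induction_on with
        | empty => intro _; simp
        | cons a t ih =>
          intro hs
          rw [Multiset.sum_cons, inner_add_left]
          have ha := hs a (Multiset.mem_cons_self a t)
          have ht := ih (fun x hx => hs x (Multiset.mem_cons_of_mem hx))
          linarith
      have h1 : ⟪r.sum, α⟫ ≤ 0 :=
        hnp r (fun x hx => hobtuse x (hrsimple x hx) α hα (hrne x hx))
      rw [hrs] at h1
      exact absurd h1 (not_le.mpr (hselfpos α hαne))
    · have hns : (k • α : V) = (k : ℝ) • α := (Nat.cast_smul_eq_nsmul ℝ k α).symm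
      have hfk : (k : ℝ) * ⟪α, ρ⟫ + ⟪r.sum, ρ⟫ = ⟪α, ρ⟫ := by
        have h5 := congrArg (fun v : V => ⟪v, ρ⟫) hsum2
        simpa [inner_add_left, hns, real_inner_smul_left] using h5
      have hαρ : 0 < ⟪α, ρ⟫ := hposroot α hαpos
      have hrnn : 0 ≤ ⟪r.sum, ρ⟫ := hnn r hrsimple
      have hk1 : k = 1 := by
        have hkr : (1 : ℝ) ≤ (k : ℝ) := by exact_mod_cast hkpos
        have hk2 : (k : ℝ) ≤ 1 := by nlinarith
        have hk3 : (k : ℝ) = 1 := le_antisymm hk2 hkr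
        exact_mod_cast hk3
      have hrsum0 : ⟪r.sum, ρ⟫ = 0 := by
        rw [hk1] at hfk
        push_cast at hfk
        linarith
      have hr0 : r = 0 := by
        by_contra hne0
        obtain ⟨x, hx⟩ := Multiset.exists_mem_of_ne_zero hne0
        obtain ⟨r', hr'⟩ := Multiset.exists_cons_of_mem hx
        rw [hr', Multiset.sum_cons, inner_add_left] at hrsum0
        have h1 : 0 < ⟪x, ρ⟫ := by
          rw [hiρ x (hrsimple x hx)]
          exact hselfpos x (R.ne_zero x (R.pos_sub (R.simples_sub (hrsimple x hx))))
        have h2 : 0 ≤ ⟪r'.sum, ρ⟫ := by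
          apply hnn
          intro z hz
          exact hrsimple z (by rw [hr']; exact Multiset.mem_cons_of_mem hz)
        linarith
      rw [← hsplit, hrep, ← hrdef, hr0, hk1]
      simp
  -- the Weyl group preserves the set of roots
  have hW : ∀ g : V ≃ₗᵢ[ℝ] V, g ∈ R.W →
      ∀ β ∈ R.roots, g β ∈ R.roots ∧ g⁻¹ β ∈ R.roots := by
    intro g hg
    refine Subgroup.closure_induction ?_ ?_ ?_ ?_ hg
    · rintro x ⟨γ, hγ, rfl⟩ β hβ
      have hγroot := R.pos_sub (R.simples_sub hγ)
      refine ⟨hR.refl_stable γ hγroot β hβ, ?_⟩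
      rw [srefl_inv]
      exact hR.refl_stable γ hγroot β hβ
    · intro β hβ
      rw [inv_one]
      exact ⟨hβ, hβ⟩
    · intro g h hgmem hhmem ihg ihh β hβ
      constructor
      · have he : (g * h) β = g (h β) := rfl
        rw [he]
        exact (ihg _ (ihh β hβ).1).1
      · have he : (g * h)⁻¹ β = h⁻¹ (g⁻¹ β) := by rw [mul_inv_rev]; rfl
        rw [he]
        exact (ihh _ (ihg β hβ).2).2
    · intro g hgmem ih β hβ
      refine ⟨(ih β hβ).2, ?_⟩
      rw [inv_inv]
      exact (ih β hβ).1
  -- main argument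
  have hyθ : y⁻¹ θ = α := by
    rw [← hyα]
    exact y.symm_apply_apply α
  have h1root : y⁻¹ β₁ ∈ R.roots := (hW y hyW β₁ (R.pos_sub hβ₁)).2
  have h2root : y⁻¹ β₂ ∈ R.roots := (hW y hyW β₂ (R.pos_sub hβ₂)).2
  have hadd : y⁻¹ β₁ + y⁻¹ β₂ = α := by
    rw [← hyθ, ← hsum]
    exact (map_add _ _ _).symm
  have hloc : ∀ v ∈ R.roots, v ∈ R.pos ∨ -v ∈ R.pos := by
    intro v hv
    rw [R.eq_union] at hv
    rcases hv with h | ⟨p, hp, hpv⟩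
    · exact Or.inl h
    · right
      rw [← hpv, neg_neg]
      exact hp
  have hnotpos : ¬ (y⁻¹ β₁ ∈ R.pos ∧ y⁻¹ β₂ ∈ R.pos) := by
    rintro ⟨h1, h2⟩
    obtain ⟨m₁, hm₁, hs₁⟩ := AddSubmonoid.exists_multiset_of_mem_closure (hR.pos_comb _ h1)
    obtain ⟨m₂, hm₂, hs₂⟩ := AddSubmonoid.exists_multiset_of_mem_closure (hR.pos_comb _ h2)
    have hkey := key (m₁ + m₂)
      (by
        intro x hx
        rcases Multiset.mem_add.mp hx with h | h
        exacts [hm₁ x h, hm₂ x h])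
      (by rw [Multiset.sum_add, hs₁, hs₂, hadd])
    have hcard := congrArg Multiset.card hkey
    rw [Multiset.card_add, Multiset.card_singleton] at hcard
    have hm₁ne : m₁ ≠ 0 := by
      rintro rfl
      rw [Multiset.sum_zero] at hs₁
      exact R.ne_zero _ h1root hs₁.symm
    have hm₂ne : m₂ ≠ 0 := by
      rintro rfl
      rw [Multiset.sum_zero] at hs₂
      exact R.ne_zero _ h2root hs₂.symm
    have hc1 := Multiset.card_pos.mpr hm₁ne
    have hc2 := Multiset.card_pos.mpr hm₂ne
    omega
  have hnotneg : ¬ (-(y⁻¹ β₁) ∈ R.pos ∧ -(y⁻¹ β₂) ∈ R.pos) := by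
    rintro ⟨h1, h2⟩
    have hf1 := hposroot _ h1
    have hf2 := hposroot _ h2
    have hfα := hposroot α hαpos
    have h3 : ⟪y⁻¹ β₁ + y⁻¹ β₂, ρ⟫ = ⟪α, ρ⟫ := by rw [hadd]
    rw [inner_add_left] at h3
    rw [inner_neg_left] at hf1 hf2
    linarith
  have hmemN : ∀ β : V, β ∈ R.pos → (β ∈ R.N y ↔ -(y⁻¹ β) ∈ R.pos) := by
    intro β hβ
    constructor
    · rintro ⟨-, p, hp, hpv⟩
      rw [← hpv, neg_neg]
      exact hp
    · intro h
      exact ⟨hβ, ⟨-(y⁻¹ β), h, neg_neg _⟩⟩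
  rcases hloc _ h1root with hp1 | hn1
  · have hβ₁N : β₁ ∉ R.N y := by
      rw [hmemN β₁ hβ₁]
      exact R.not_both _ hp1
    have hn2 : -(y⁻¹ β₂) ∈ R.pos := by
      rcases hloc _ h2root with hp2 | hn2
      · exact absurd ⟨hp1, hp2⟩ hnotpos
      · exact hn2
    exact Or.inr ⟨(hmemN β₂ hβ₂).mpr hn2, hβ₁N⟩
  · have hβ₁N : β₁ ∈ R.N y := (hmemN β₁ hβ₁).mpr hn1
    have hβ₂N : β₂ ∉ R.N y := by
      rw [hmemN β₂ hβ₂]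
      intro h
      exact hnotneg ⟨hn1, h⟩
    exact Or.inl ⟨hβ₁N, hβ₂N⟩
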